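/- Every play of the formula size game FS^Π_k(𝔸,𝔹) is finite. -/

import Mathlib

/-! ## Core: Kripke models, GGMSC schemata and programs -/

structure Kripke (W : Type) (P : Type) where
  R : W → W → Prop
  V : W → P → Prop

/-- Schemata of graded modal substitution calculus with the counting global
modality (GGMSC), over proposition symbols `P` and schema variables `T`.
`dia k` is `◇_{≥k}`, `box k` is `□_{<k}`, `gdia k` is `⟨E⟩_{≥k}` and
`gbox k` is `[E]_{<k}`. -/
inductive Schema (P : Type) (T : Type) : Type where
  | bot | top
  | prop (p : P)
  | var (X : T)
  | neg (φ : Schema P T)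
  | or (φ ψ : Schema P T)
  | and (φ ψ : Schema P T)
  | dia (k : ℕ) (φ : Schema P T)
  | box (k : ℕ) (φ : Schema P T)
  | gdia (k : ℕ) (φ : Schema P T)
  | gbox (k : ℕ) (φ : Schema P T)

/-- Formulae of graded modal logic with the counting global modality (GGML):
schemata with no schema variables. -/
abbrev GGFormula (P : Type) : Type := Schema P Empty

namespace Schema

def ofFormula {P T : Type} : GGFormula P → Schema P T
  | .bot => .bot
  | .top => .top
  | .prop p => .prop p
  | .var X => X.elim
  | .neg φ => .neg (ofFormula φ)
  | .or φ ψ => .or (ofFormula φ) (ofFormula ψ)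
  | .and φ ψ => .and (ofFormula φ) (ofFormula ψ)
  | .dia k φ => .dia k (ofFormula φ)
  | .box k φ => .box k (ofFormula φ)
  | .gdia k φ => .gdia k (ofFormula φ)
  | .gbox k φ => .gbox k (ofFormula φ)

/-- Truth of a `(P,T)`-schema in a Kripke model `M` at node `w`, where the
schema variables are interpreted by the labeling `g`. -/
def Sat {W P T : Type} (M : Kripke W P) (g : W → T → Prop) : W → Schema P T → Prop
  | _, .bot => False
  | _, .top => True
  | w, .prop p => M.V w p
  | w, .var X => g w X
  | w, .neg φ => ¬ Sat M g w φ
  | w, .or φ ψ => Sat M g w φ ∨ Sat M g w ψ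
  | w, .and φ ψ => Sat M g w φ ∧ Sat M g w ψ
  | w, .dia k φ => ∃ f : Fin k → W, Function.Injective f ∧ ∀ i, M.R w (f i) ∧ Sat M g (f i) φ
  | w, .box k φ => ¬ ∃ f : Fin k → W, Function.Injective f ∧ ∀ i, M.R w (f i) ∧ ¬ Sat M g (f i) φ
  | w, .gdia k φ => ∃ f : Fin k → W, Function.Injective f ∧ ∀ i, Sat M g (f i) φ
  | w, .gbox k φ => ¬ ∃ f : Fin k → W, Function.Injective f ∧ ∀ i, ¬ Sat M g (f i) φ

/-- Size of a schema: the number of proposition symbols, schema variables,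
negations and binary connectives, plus the counting thresholds of all
diamonds and boxes. -/
def size {P T : Type} : Schema P T → ℕ
  | .bot => 0
  | .top => 0
  | .prop _ => 1
  | .var _ => 1
  | .neg φ => size φ + 1
  | .or φ ψ => size φ + size ψ + 1
  | .and φ ψ => size φ + size ψ + 1
  | .dia k φ => size φ + k
  | .box k φ => size φ + k
  | .gdia k φ => size φ + k
  | .gbox k φ => size φ + k

/-- Strong negation normal form: the only negated subschemata are negated
proposition symbols. -/
def SNNF {P T : Type} : Schema P T → Prop
  | .neg (.prop _) => True
  | .neg _ => False
  | .or φ ψ => SNNF φ ∧ SNNF ψ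
  | .and φ ψ => SNNF φ ∧ SNNF ψ
  | .dia _ φ => SNNF φ
  | .box _ φ => SNNF φ
  | .gdia _ φ => SNNF φ
  | .gbox _ φ => SNNF φ
  | _ => True

/-- A schema of `MSC`: only non-graded local diamonds and boxes. -/
def IsMSC {P T : Type} : Schema P T → Prop
  | .neg φ => IsMSC φ
  | .or φ ψ => IsMSC φ ∧ IsMSC ψ
  | .and φ ψ => IsMSC φ ∧ IsMSC ψ
  | .dia k φ => k = 1 ∧ IsMSC φ
  | .box k φ => k = 1 ∧ IsMSC φ
  | .gdia _ _ => False
  | .gbox _ _ => False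
  | _ => True

/-- A schema of `SC`: no diamonds or boxes at all. -/
def IsSC {P T : Type} : Schema P T → Prop
  | .neg φ => IsSC φ
  | .or φ ψ => IsSC φ ∧ IsSC ψ
  | .and φ ψ => IsSC φ ∧ IsSC ψ
  | .dia _ _ => False
  | .box _ _ => False
  | .gdia _ _ => False
  | .gbox _ _ => False
  | _ => True

/-- Modal depth of a schema. -/
def mdepth {P T : Type} : Schema P T → ℕ
  | .neg φ => mdepth φ
  | .or φ ψ => max (mdepth φ) (mdepth ψ)
  | .and φ ψ => max (mdepth φ) (mdepth ψ)
  | .dia _ φ => mdepth φ + 1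
  | .box _ φ => mdepth φ + 1
  | .gdia _ φ => mdepth φ + 1
  | .gbox _ φ => mdepth φ + 1
  | _ => 0

end Schema

/-- A `(P,T)`-program of GGMSC: a base rule (a GGML formula) and an induction
rule (a schema) for each head predicate in `T`, together with a set of
accepting predicates. -/
structure Program (P : Type) (T : Type) where
  base : T → GGFormula P
  rule : T → Schema P T
  acc : Set T

namespace Program

/-- `Λ.stage M n w X` holds iff `M, w ⊨ X^n`, i.e. the head predicate `X` is
true at `w` in round `n` of the run of `Λ` on `M`.  As a function of `w` and
`X` this is the global configuration of `Λ` in round `n`. -/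
def stage {W P T : Type} (Λ : Program P T) (M : Kripke W P) : ℕ → W → T → Prop
  | 0 => fun w X => Schema.Sat M (fun _ (_ : T) => False) w (Schema.ofFormula (Λ.base X))
  | n + 1 => fun w X => Schema.Sat M (Λ.stage M n) w (Λ.rule X)

/-- `Λ` accepts the pointed model `(M,w)`: some accepting predicate becomes
true at `w` in some round. -/
def Accepts {W P T : Type} (Λ : Program P T) (M : Kripke W P) (w : W) : Prop :=
  ∃ n : ℕ, ∃ X ∈ Λ.acc, Λ.stage M n w X

/-- The size of a program: the sum of the sizes of the bodies of all its rules. -/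
def size {P T : Type} [Fintype T] (Λ : Program P T) : ℕ :=
  ∑ X : T, ((Λ.base X).size + (Λ.rule X).size)

/-- A program is in strong negation normal form if all the bodies of its rules are. -/
def SNNFP {P T : Type} (Λ : Program P T) : Prop :=
  ∀ X : T, (Λ.base X).SNNF ∧ (Λ.rule X).SNNF

/-- A program of `MSC`. -/
def IsMSCP {P T : Type} (Λ : Program P T) : Prop :=
  ∀ X : T, (Λ.base X).IsMSC ∧ (Λ.rule X).IsMSC

/-- A program of `SC`. -/
def IsSCP {P T : Type} (Λ : Program P T) : Prop :=
  ∀ X : T, (Λ.base X).IsSC ∧ (Λ.rule X).IsSC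

end Program

/-! ## The formula size game FS^Π_k(𝔸,𝔹) for GGMSC -/

/-- A pointed Kripke model over propositions `P`. -/
structure PModel (P : Type) : Type 1 where
  W : Type
  M : Kripke W P
  pt : W

/-- A clocked pointed model `(M, w, ℓ)`. -/
abbrev CModel (P : Type) : Type 1 := PModel P × ℕ

/-- Node labels of (partial) syntax forests. -/
inductive FSLabel (P : Type) : Type where
  | bot | top
  | prop (p : P)
  | var (X : ℕ)
  | neg | or | and
  | dia (k : ℕ) | box (k : ℕ) | gdia (k : ℕ) | gbox (k : ℕ)

namespace FSLabel

def cost {P : Type} : FSLabel P → ℕ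
  | .dia k => k | .box k => k | .gdia k => k | .gbox k => k
  | _ => 1

def isModal {P : Type} : FSLabel P → Bool
  | .dia _ => true | .box _ => true | .gdia _ => true | .gbox _ => true
  | _ => false

def isSig {P : Type} : FSLabel P → Prop
  | .bot => True | .top => True | .prop _ => True
  | _ => False

end FSLabel

/-- A position of the formula size game: a finite partial syntax forest
(nodes `V`, tree edges `E`, back edges `B`, a partial labeling `lab`, the
head-predicate assignment `rho : node ↦ (variable, isBase)`), the set `U` of
active nodes, and the finite sets of clocked models attached to each node. -/
structure FSPos (P : Type) : Type 1 where
  V : Finset ℕ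
  E : Finset (ℕ × ℕ)
  B : Finset (ℕ × ℕ)
  lab : ℕ → Option (FSLabel P)
  rho : ℕ → ℕ × Bool
  U : Finset ℕ
  left : ℕ → Set (CModel P)
  right : ℕ → Set (CModel P)
  finL : ∀ n, (left n).Finite
  finR : ∀ n, (right n).Finite

namespace FSPos

/-- Size of the partial syntax forest: each non-modal (or unlabeled) node
counts 1, modal nodes count their threshold, and each root counts 1 more. -/
def size {P : Type} (p : FSPos P) : ℕ :=
  (p.V.sum fun v => (p.lab v).elim 1 FSLabel.cost) +
    (p.V.filter fun v => ∀ u ∈ p.V, (u, v) ∉ p.E).card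

/-- The number of diamonds and boxes occurring in the forest. -/
def modalCount {P : Type} (p : FSPos P) : ℕ :=
  (p.V.filter fun v => ((p.lab v).elim false FSLabel.isModal) = true).card

end FSPos

/-- `iter` of a class of clocked models: decrement all (positive) clocks. -/
def iterC {P : Type} (S : Set (CModel P)) : Set (CModel P) :=
  {x | (x.1, x.2 + 1) ∈ S}

/-- `init` of a class of clocked models: keep the zero-clocked models. -/
def initC {P : Type} (S : Set (CModel P)) : Set (CModel P) :=
  {x | x ∈ S ∧ x.2 = 0}

/-- The successor models of a clocked model. -/
def succsOf {P : Type} (x : CModel P) : Set (CModel P) :=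
  {y | ∃ w' : x.1.W, x.1.M.R x.1.pt w' ∧ y = (⟨x.1.W, x.1.M, w'⟩, x.2)}

/-- All pointed models obtained from a clocked model (for global modalities). -/
def nodesOf {P : Type} (x : CModel P) : Set (CModel P) :=
  {y | ∃ w' : x.1.W, y = (⟨x.1.W, x.1.M, w'⟩, x.2)}

/-- `f` is an (`m`-successor / `m`-global) function on domain `D`:
it assigns to each model of `D` exactly `m` of its `base`-models. -/
def IsMFun {P : Type} (m : ℕ) (D : Set (CModel P))
    (base : CModel P → Set (CModel P)) (f : CModel P → Set (CModel P)) : Prop :=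
  ∀ x ∈ D, f x ⊆ base x ∧ (f x).Finite ∧ (f x).ncard = m

/-- Literal satisfaction, for Sig-moves. -/
def litHolds {P : Type} (μ : FSLabel P) (x : CModel P) : Prop :=
  match μ with
  | .top => True
  | .prop p => x.1.M.V x.1.pt p
  | _ => False

def litSeparates {P : Type} (μ : FSLabel P) (L R : Set (CModel P)) : Prop :=
  (∀ x ∈ L, litHolds μ x) ∧ (∀ x ∈ R, ¬ litHolds μ x)

/-- Samson loses outright: the forest is too big, or some base-rule node
stores a model with positive clock. -/
def samsonLoses {P : Type} (k : ℕ) (p : FSPos P) : Prop :=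
  k < p.size ∨ ∃ v ∈ p.V, (p.rho v).2 = true ∧ ∃ x ∈ p.left v, 0 < x.2

/-- Common part of a move placing one successor node `v'` under `v` with new
attached sets `Lnew`, `Rnew` (either labeling a fresh node, or following the
existing label of `v`, in which case the new sets are joined with the sets
stored at `v'`). -/
def extend1 {P : Type} (p q : FSPos P) (v v' : ℕ) (μ : FSLabel P)
    (Lnew Rnew : Set (CModel P)) : Prop :=
  v' ≠ v ∧
  ((p.lab v = none ∧ v' ∉ p.V ∧ q.V = insert v' p.V ∧ q.E = insert (v, v') p.E ∧
      q.lab = Function.update p.lab v (some μ) ∧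
      q.rho = Function.update p.rho v' (p.rho v)) ∨
    (p.lab v = some μ ∧ (v, v') ∈ p.E ∧ q.V = p.V ∧ q.E = p.E ∧
      q.lab = p.lab ∧ q.rho = p.rho)) ∧
  q.B = p.B ∧
  q.U = insert v' (p.U.erase v) ∧
  q.left = Function.update (Function.update p.left v ∅) v' (Lnew ∪ p.left v') ∧
  q.right = Function.update (Function.update p.right v ∅) v' (Rnew ∪ p.right v')

/-- Common part of a binary (∨/∧) move with successor nodes `v1`, `v2`. -/
def extend2 {P : Type} (p q : FSPos P) (v v1 v2 : ℕ) (μ : FSLabel P)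
    (L1 L2 R1 R2 : Set (CModel P)) : Prop :=
  v1 ≠ v2 ∧ v1 ≠ v ∧ v2 ≠ v ∧
  ((p.lab v = none ∧ v1 ∉ p.V ∧ v2 ∉ p.V ∧ q.V = insert v1 (insert v2 p.V) ∧
      q.E = insert (v, v1) (insert (v, v2) p.E) ∧
      q.lab = Function.update p.lab v (some μ) ∧
      q.rho = Function.update (Function.update p.rho v1 (p.rho v)) v2 (p.rho v)) ∨
    (p.lab v = some μ ∧ (v, v1) ∈ p.E ∧ (v, v2) ∈ p.E ∧ q.V = p.V ∧ q.E = p.E ∧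
      q.lab = p.lab ∧ q.rho = p.rho)) ∧
  q.B = p.B ∧
  q.U = insert v1 (insert v2 (p.U.erase v)) ∧
  q.left = Function.update (Function.update (Function.update p.left v ∅)
      v1 (L1 ∪ p.left v1)) v2 (L2 ∪ p.left v2) ∧
  q.right = Function.update (Function.update (Function.update p.right v ∅)
      v1 (R1 ∪ p.right v1)) v2 (R2 ∪ p.right v2)

/-- Common part of an `X`-move with target node `v'` (pointed to by a new
back edge); `isBase` records whether the move was challenged. -/
def extendX {P : Type} (p q : FSPos P) (v v' : ℕ) (X : ℕ) (isBase : Bool)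
    (Lv' Rv' Lv Rv : Set (CModel P)) : Prop :=
  v' ≠ v ∧
  ((v' ∈ p.V ∧ p.rho v' = (X, isBase) ∧ q.V = p.V ∧ q.rho = p.rho) ∨
    (v' ∉ p.V ∧ q.V = insert v' p.V ∧ q.rho = Function.update p.rho v' (X, isBase))) ∧
  q.E = p.E ∧ q.B = insert (v, v') p.B ∧
  q.lab = Function.update p.lab v (some (.var X)) ∧
  q.U = insert v' (p.U.erase v) ∧
  q.left = Function.update (Function.update p.left v Lv) v' Lv' ∧
  q.right = Function.update (Function.update p.right v Rv) v' Rv'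

/-- The four kinds of modal moves. -/
inductive ModKind : Type where
  | dia | box | gdia | gbox
deriving DecidableEq

def ModKind.label {P : Type} : ModKind → ℕ → FSLabel P
  | .dia, m => .dia m
  | .box, m => .box m
  | .gdia, m => .gdia m
  | .gbox, m => .gbox m

/-- Is the move a local (successor) move? -/
def ModKind.isLocal : ModKind → Bool
  | .dia => true | .box => true | _ => false

/-- Does Samson give his `m`-function on the left class (◇, ⟨E⟩) or on the
right class (□, [E])? -/
def ModKind.samsonLeft : ModKind → Bool
  | .dia => true | .gdia => true | _ => false

def ModKind.baseFun {P : Type} (mk : ModKind) : CModel P → Set (CModel P) :=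
  if mk.isLocal then succsOf else nodesOf

/-- Game positions of the formula size game, including the intermediate
micro-positions inside a single move.  `win b` means the play has ended, with
Samson the winner iff `b = true`. -/
inductive GPos (P : Type) : Type 1 where
  | start : GPos P
  | clockS (A' : Set (PModel P)) : GPos P
  | chooseB (cA : Set (CModel P)) : GPos P
  | setup (cA cB : Set (CModel P)) : GPos P
  | main (p : FSPos P) : GPos P
  | atNode (p : FSPos P) (v : ℕ) : GPos P
  | modalD (p : FSPos P) (v v' : ℕ) (mk : ModKind) (m : ℕ)
      (f : CModel P → Set (CModel P)) : GPos P
  | modalS (p : FSPos P) (v v' : ℕ) (mk : ModKind) (m : ℕ)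
      (f : CModel P → Set (CModel P)) (D : Set (CModel P))
      (h : CModel P → Set (CModel P)) (chosen : Set (CModel P)) : GPos P
  | xchal (p : FSPos P) (v : ℕ) (X : ℕ) : GPos P
  | win (samson : Bool) : GPos P

/-- Whose turn it is (`true` = Samson). -/
def GPos.turn {P : Type} : GPos P → Bool
  | .start => false
  | .clockS _ => true
  | .chooseB _ => false
  | .setup _ _ => true
  | .main _ => false
  | .atNode _ _ => true
  | .modalD _ _ _ _ _ _ => false
  | .modalS _ _ _ _ _ _ _ _ _ => true
  | .xchal _ _ _ => false
  | .win _ => false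

/-- The moves of the formula size game `FS^Π_k(𝔸,𝔹)`. -/
inductive gstep {P : Type} (k : ℕ) (A B : Set (PModel P)) : GPos P → GPos P → Prop where
  /- Delilah chooses a finite subset `𝔸' ⊆ 𝔸`. -/
  | start (A' : Set (PModel P)) (hsub : A' ⊆ A) (hfin : A'.Finite) :
      gstep k A B .start (.clockS A')
  /- Samson assigns a clock to each chosen left model. -/
  | clock (A' : Set (PModel P)) (c : PModel P → ℕ) :
      gstep k A B (.clockS A') (.chooseB {x | x.1 ∈ A' ∧ x.2 = c x.1})
  /- Delilah chooses a finite set of clocked models from `𝔹`. -/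
  | chooseB (cA cB : Set (CModel P)) (hsub : ∀ x ∈ cB, x.1 ∈ B) (hfin : cB.Finite) :
      gstep k A B (.chooseB cA) (.setup cA cB)
  /- Samson sets up the initial position: a discrete forest whose nodes come
     in base/iter pairs per head predicate, the left models distributed over
     the nodes, and the right sets induced by `cB` and `rho`. -/
  | setup (cA cB : Set (CModel P)) (p : FSPos P)
      (hU : p.U = p.V) (hE : p.E = ∅) (hB : p.B = ∅) (hlab : ∀ n, p.lab n = none)
      (hpair : ∀ v ∈ p.U, ∃ u ∈ p.U,
        (p.rho u).1 = (p.rho v).1 ∧ (p.rho u).2 = !(p.rho v).2)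
      (hleft1 : ∀ v, p.left v ⊆ cA)
      (hleft2 : ∀ x ∈ cA, ∃ v ∈ p.U, x ∈ p.left v)
      (hleft3 : ∀ v ∉ p.U, p.left v = ∅)
      (hright1 : ∀ v ∈ p.U, p.right v = if (p.rho v).2 then cB else initC cB)
      (hright2 : ∀ v ∉ p.U, p.right v = ∅) :
      gstep k A B (.setup cA cB) (.main p)
  /- Samson loses if the forest got too large or a base node stores a
     positively clocked model. -/
  | samsonLoses (p : FSPos P) (h : samsonLoses k p) :
      gstep k A B (.main p) (.win false)
  /- Delilah chooses an active node. -/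
  | pick (p : FSPos P) (v : ℕ) (hv : v ∈ p.U) (h : ¬ samsonLoses k p) :
      gstep k A B (.main p) (.atNode p v)
  /- Sig-move: Samson plays a literal; the play ends, and Samson wins iff the
     literal separates the attached sets. -/
  | sigMove (p : FSPos P) (v : ℕ) (μ : FSLabel P) (b : Bool) (hsig : μ.isSig)
      (hcompat : p.lab v = none ∨ p.lab v = some μ)
      (hb : b = true ↔ litSeparates μ (p.left v) (p.right v)) :
      gstep k A B (.atNode p v) (.win b)
  /- ¬-move: swap the sets. -/
  | negMove (p q : FSPos P) (v v' : ℕ)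
      (hext : extend1 p q v v' .neg (p.right v) (p.left v)) :
      gstep k A B (.atNode p v) (.main q)
  /- ∨-move: Samson splits the left set. -/
  | orMove (p q : FSPos P) (v v1 v2 : ℕ) (L1 L2 : Set (CModel P))
      (hsplit : L1 ∪ L2 = p.left v)
      (hext : extend2 p q v v1 v2 .or L1 L2 (p.right v) (p.right v)) :
      gstep k A B (.atNode p v) (.main q)
  /- ∧-move: Samson splits the right set. -/
  | andMove (p q : FSPos P) (v v1 v2 : ℕ) (R1 R2 : Set (CModel P))
      (hsplit : R1 ∪ R2 = p.right v)
      (hext : extend2 p q v v1 v2 .and (p.left v) (p.left v) R1 R2) :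
      gstep k A B (.atNode p v) (.main q)
  /- Modal move, part 1: Samson chooses the kind, the threshold `m ≥ 1`, the
     target node and an `m`-function on his class. -/
  | modalMoveS (p : FSPos P) (v v' : ℕ) (mk : ModKind) (m : ℕ)
      (f : CModel P → Set (CModel P)) (hm : 0 < m)
      (hcompat : p.lab v = none ∨ p.lab v = some (mk.label m))
      (hf : IsMFun m (if mk.samsonLeft then p.left v else p.right v) mk.baseFun f) :
      gstep k A B (.atNode p v) (.modalD p v v' mk m f)
  /- Modal move, part 2: Delilah gives a partial `m`-function on the other
     class and chooses a finite subset of the models offered by `f`. -/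
  | modalMoveD (p : FSPos P) (v v' : ℕ) (mk : ModKind) (m : ℕ)
      (f : CModel P → Set (CModel P)) (D : Set (CModel P))
      (h : CModel P → Set (CModel P)) (chosen : Set (CModel P))
      (hD : D ⊆ (if mk.samsonLeft then p.right v else p.left v))
      (hh : IsMFun m D mk.baseFun h)
      (hchfin : chosen.Finite)
      (hch : chosen ⊆ ⋃ x ∈ (if mk.samsonLeft then p.left v else p.right v), f x) :
      gstep k A B (.modalD p v v' mk m f) (.modalS p v v' mk m f D h chosen)
  /- Modal move, part 3: Samson answers with nonempty finite subsets of the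
     sets offered by Delilah's partial function, and the move is completed. -/
  | modalMoveS2 (p q : FSPos P) (v v' : ℕ) (mk : ModKind) (m : ℕ)
      (f : CModel P → Set (CModel P)) (D : Set (CModel P))
      (h : CModel P → Set (CModel P)) (chosen : Set (CModel P))
      (r : CModel P → Set (CModel P))
      (hr : ∀ y ∈ D, r y ⊆ h y ∧ (r y).Finite ∧ (r y).Nonempty)
      (hext : extend1 p q v v' (mk.label m)
        (if mk.samsonLeft then chosen else ⋃ y ∈ D, r y)
        (if mk.samsonLeft then ⋃ y ∈ D, r y else chosen)) :
      gstep k A B (.modalS p v v' mk m f D h chosen) (.main q)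
  /- X-move: Samson chooses a head predicate (not allowed inside a base
     rule); then Delilah decides whether to challenge. -/
  | xMove (p : FSPos P) (v : ℕ) (X : ℕ)
      (hiter : (p.rho v).2 = false)
      (hcompat : p.lab v = none ∨ p.lab v = some (.var X)) :
      gstep k A B (.atNode p v) (.xchal p v X)
  /- If Delilah does not challenge and both iterated sets are empty, Samson
     wins. -/
  | xWin (p : FSPos P) (v : ℕ) (X : ℕ)
      (h1 : iterC (p.left v) = ∅) (h2 : iterC (p.right v) = ∅) :
      gstep k A B (.xchal p v X) (.win true)
  /- Delilah does not challenge: the clocks are decremented, the zero-clocked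
     models stay at `v`, and the play moves to the iter-node of `X`. -/
  | xNoChal (p q : FSPos P) (v v' : ℕ) (X : ℕ)
      (hne : ¬ (iterC (p.left v) = ∅ ∧ iterC (p.right v) = ∅))
      (hext : extendX p q v v' X false
        (iterC (p.left v) ∪ p.left v') (iterC (p.right v) ∪ p.right v')
        (initC (p.left v)) (initC (p.right v))) :
      gstep k A B (.xchal p v X) (.main q)
  /- Delilah challenges: a fresh base node for `X` is created, with the
     zero-clocked models. -/
  | xChal (p q : FSPos P) (v v' : ℕ) (X : ℕ) (hfresh : v' ∉ p.V)
      (hext : extendX p q v v' X true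
        (initC (p.left v)) (initC (p.right v)) ∅ ∅) :
      gstep k A B (.xchal p v X) (.main q)

/-- `WinFor k A B who inv g` : the player `who` (`true` = Samson, `false` =
Delilah) has a winning strategy in the formula size game from position `g`,
moreover maintaining the invariant `inv` at every macro position along the
strategy.  (With `inv = fun _ => True` this is an ordinary winning strategy.) -/
inductive WinFor {P : Type} (k : ℕ) (A B : Set (PModel P)) (who : Bool)
    (inv : FSPos P → Prop) : GPos P → Prop where
  | term : WinFor k A B who inv (.win who)
  | opp (g : GPos P) (hturn : g.turn = !who) (hnw : ∀ b, g ≠ .win b)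
      (hinv : ∀ p, g = .main p → inv p)
      (h : ∀ g', gstep k A B g g' → WinFor k A B who inv g') :
      WinFor k A B who inv g
  | mine (g g' : GPos P) (hturn : g.turn = who) (hnw : ∀ b, g ≠ .win b)
      (hinv : ∀ p, g = .main p → inv p)
      (hstep : gstep k A B g g') (h : WinFor k A B who inv g') :
      WinFor k A B who inv g

/-! ## Auxiliary material for the finiteness of plays -/

namespace FSFinite

variable {P : Type}

/-- The edge relation of the syntax forest. -/
def edgeR (E : Finset (ℕ × ℕ)) : ℕ → ℕ → Prop := fun a b => (a, b) ∈ E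

/-- Strict descendants of a node. -/
def desc (E : Finset (ℕ × ℕ)) (v : ℕ) : Set ℕ := {u | Relation.TransGen (edgeR E) v u}

/-- Number of strict descendants. -/
noncomputable def ndesc (E : Finset (ℕ × ℕ)) (v : ℕ) : ℕ := (desc E v).ncard

/-- The set of clock values at a node. -/
def cset (p : FSPos P) (v : ℕ) : Set ℕ := Prod.snd '' (p.left v ∪ p.right v)

/-- Maximal clock value occurring at a node. -/
noncomputable def cmax (p : FSPos P) (v : ℕ) : ℕ := sSup (cset p v)

lemma cset_finite (p : FSPos P) (v : ℕ) : (cset p v).Finite :=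
  (((p.finL v).union (p.finR v)).image _)

lemma le_cmax (p : FSPos P) (v : ℕ) {x : CModel P}
    (hx : x ∈ p.left v ∨ x ∈ p.right v) : x.2 ≤ cmax p v :=
  le_csSup (cset_finite p v).bddAbove ⟨x, by simpa using hx, rfl⟩

lemma cmax_le (p : FSPos P) (v : ℕ) {m : ℕ}
    (h : ∀ x : CModel P, (x ∈ p.left v ∨ x ∈ p.right v) → x.2 ≤ m) : cmax p v ≤ m := by
  apply csSup_le'
  rintro n ⟨x, hx, rfl⟩
  exact h x (by simpa using hx)

lemma cmax_exists (p : FSPos P) (v : ℕ) (h : 1 ≤ cmax p v) :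
    ∃ x : CModel P, (x ∈ p.left v ∨ x ∈ p.right v) ∧ x.2 = cmax p v := by
  rcases Set.eq_empty_or_nonempty (cset p v) with he | hne
  · exfalso
    have : cmax p v = 0 := by simp [cmax, he]
    omega
  · have := Nat.sSup_mem hne (cset_finite p v).bddAbove
    rcases this with ⟨x, hx, hx2⟩
    exact ⟨x, by simpa using hx, hx2⟩

/-- The node-sum-plus-roots weight of a node. -/
def wt (p : FSPos P) (u : ℕ) : ℕ := (p.lab u).elim 1 FSLabel.cost

lemma size_eq (p : FSPos P) :
    p.size = (p.V.sum fun v => wt p v) +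
      (p.V.filter fun v => ∀ u ∈ p.V, (u, v) ∉ p.E).card := rfl

/-- The invariant maintained at every forest position along a play. -/
structure Inv (C : ℕ) (p : FSPos P) : Prop where
  hUV : ∀ v ∈ p.U, v ∈ p.V
  hEV : ∀ e ∈ p.E, e.1 ∈ p.V ∧ e.2 ∈ p.V
  hac : ∀ v, ¬ Relation.TransGen (edgeR p.E) v v
  hzero : ∀ v, v ∉ p.U → ∀ x : CModel P, (x ∈ p.left v ∨ x ∈ p.right v) → x.2 = 0
  hclk : ∀ v, ∀ x : CModel P, (x ∈ p.left v ∨ x ∈ p.right v) → x.2 ≤ C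
  hcost : ∀ v μ, p.lab v = some μ → 1 ≤ FSLabel.cost μ

lemma cmax_le_C {C : ℕ} {p : FSPos P} (hI : Inv C p) (v : ℕ) : cmax p v ≤ C :=
  cmax_le p v (hI.hclk v)

lemma memU_of_cmax_pos {C : ℕ} {p : FSPos P} (hI : Inv C p) {v : ℕ}
    (h : 1 ≤ cmax p v) : v ∈ p.U := by
  by_contra hv
  rcases cmax_exists p v h with ⟨x, hx, hx2⟩
  have := hI.hzero v hv x hx
  omega

lemma desc_subset_V {p : FSPos P} (hEV : ∀ e ∈ p.E, e.1 ∈ p.V ∧ e.2 ∈ p.V) (v : ℕ) :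
    desc p.E v ⊆ ↑p.V := by
  intro u hu
  induction hu with
  | single h => exact (hEV _ h).2
  | tail _ h _ => exact (hEV _ h).2

lemma ndesc_le {p : FSPos P} (hEV : ∀ e ∈ p.E, e.1 ∈ p.V ∧ e.2 ∈ p.V) (v : ℕ) :
    ndesc p.E v ≤ p.V.card := by
  have h1 : (desc p.E v).ncard ≤ (↑p.V : Set ℕ).ncard :=
    Set.ncard_le_ncard (desc_subset_V hEV v) p.V.finite_toSet
  simpa [ndesc, Set.ncard_coe_finset] using h1

lemma ndesc_lt_of_edge {p : FSPos P} (hEV : ∀ e ∈ p.E, e.1 ∈ p.V ∧ e.2 ∈ p.V)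
    (hac : ∀ v, ¬ Relation.TransGen (edgeR p.E) v v) {v v' : ℕ}
    (he : (v, v') ∈ p.E) : ndesc p.E v' < ndesc p.E v := by
  have hsub : desc p.E v' ⊆ desc p.E v := fun u hu => Relation.TransGen.head he hu
  have hmem : v' ∈ desc p.E v := Relation.TransGen.single he
  have hnot : v' ∉ desc p.E v' := hac v'
  have hss : desc p.E v' ⊂ desc p.E v := ⟨hsub, fun h => hnot (h hmem)⟩
  exact Set.ncard_lt_ncard hss ((p.V.finite_toSet).subset (desc_subset_V hEV v))

lemma acyclic_insert {E : Finset (ℕ × ℕ)} {v v' : ℕ} (hne : v ≠ v')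
    (hout : ∀ e ∈ E, e.1 ≠ v')
    (hac : ∀ u, ¬ Relation.TransGen (edgeR E) u u) :
    ∀ u, ¬ Relation.TransGen (edgeR (insert (v, v') E)) u u := by
  have hstep : ∀ a b, edgeR (insert (v, v') E) a b → (a = v ∧ b = v') ∨ edgeR E a b := by
    intro a b h
    rcases Finset.mem_insert.1 h with h | h
    · left; simpa [Prod.ext_iff] using h
    · right; exact h
  have hnosucc : ∀ b, ¬ edgeR (insert (v, v') E) v' b := by
    intro b hb
    rcases hstep _ _ hb with ⟨h1, _⟩ | h
    · exact hne h1.symm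
    · exact hout _ h rfl
  have hmain : ∀ a b, Relation.TransGen (edgeR (insert (v, v') E)) a b →
      Relation.TransGen (edgeR E) a b ∨ b = v' := by
    intro a b h
    induction h with
    | single h =>
      rcases hstep _ _ h with ⟨_, rfl⟩ | h
      · right; rfl
      · left; exact Relation.TransGen.single h
    | tail _ h ih =>
      rcases hstep _ _ h with ⟨_, rfl⟩ | h'
      · right; rfl
      · rcases ih with ih | rfl
        · left; exact Relation.TransGen.tail ih h'
        · exact absurd rfl (hout _ h')
  intro u hu
  rcases hmain _ _ hu with h | rfl
  · exact hac u h
  · rcases Relation.TransGen.head'_iff.1 hu with ⟨c, h, _⟩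
    exact hnosucc _ h

end FSFinite
namespace FSFinite

variable {P : Type}

/-- Weight of a node in the inner measure. -/
noncomputable def tval (k : ℕ) (p : FSPos P) (v : ℕ) : ℕ :=
  (k + 3) ^ ((k + 2) * cmax p v + ndesc p.E v)

/-- The inner (multiset-style) measure. -/
noncomputable def innerM (k : ℕ) (p : FSPos P) : ℕ := ∑ v ∈ p.U, tval k p v

/-- Bound for the inner measure. -/
def IB2 (k C : ℕ) : ℕ := (k + 3) * (k + 3) ^ ((k + 2) * C + (k + 3))

def BIG (k C : ℕ) : ℕ := 8 * IB2 k C + 10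

def slack (k : ℕ) (p : FSPos P) : ℕ := k + 1 - p.size

lemma tval_pos (k : ℕ) (p : FSPos P) (v : ℕ) : 1 ≤ tval k p v :=
  Nat.one_le_pow _ _ (by omega)

lemma cardV_le_size {C : ℕ} {p : FSPos P} (hI : Inv C p) : p.V.card ≤ p.size := by
  rw [size_eq]
  have h1 : p.V.card ≤ p.V.sum fun v => wt p v := by
    calc p.V.card = p.V.card • 1 := by simp
    _ ≤ _ := Finset.card_nsmul_le_sum p.V _ 1 (by
        intro v _
        unfold wt
        cases hl : p.lab v with
        | none => simp
        | some μ => simpa using hI.hcost v μ hl)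
  omega

lemma innerM_le {k C : ℕ} {p : FSPos P} (hI : Inv C p) (hV : p.V.card ≤ k + 2) :
    innerM k p ≤ IB2 k C := by
  have hcardU : p.U.card ≤ k + 2 := by
    calc p.U.card ≤ p.V.card := Finset.card_le_card fun v hv => hI.hUV v hv
    _ ≤ k + 2 := hV
  have hterm : ∀ v ∈ p.U, tval k p v ≤ (k + 3) ^ ((k + 2) * C + (k + 3)) := by
    intro v _
    apply Nat.pow_le_pow_right (by omega)
    have h1 : cmax p v ≤ C := cmax_le_C hI v
    have h2 : ndesc p.E v ≤ p.V.card := ndesc_le hI.hEV v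
    have h3 : (k + 2) * cmax p v ≤ (k + 2) * C := Nat.mul_le_mul_left _ h1
    omega
  calc innerM k p ≤ p.U.card * ((k + 3) ^ ((k + 2) * C + (k + 3))) := by
        calc innerM k p ≤ p.U.card • ((k + 3) ^ ((k + 2) * C + (k + 3))) :=
          Finset.sum_le_card_nsmul _ _ _ hterm
        _ = _ := smul_eq_mul ..
  _ ≤ IB2 k C := by
      unfold IB2
      exact Nat.mul_le_mul_right _ (by omega)

/-- Summation lemma for a move with one successor node. -/
lemma sum_lt_one (U : Finset ℕ) (t t' : ℕ → ℕ) (v v' : ℕ) (hv : v ∈ U) (hne : v' ≠ v)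
    (hsame : ∀ u ∈ U, u ≠ v → u ≠ v' → t' u = t u)
    (hlt : t' v' < t v + (if v' ∈ U then t v' else 0)) :
    ∑ u ∈ insert v' (U.erase v), t' u < ∑ u ∈ U, t u := by
  have e1 : insert v' (U.erase v) = insert v' ((U.erase v).erase v') := by
    ext u; simp; tauto
  have e2 : ∑ u ∈ insert v' (U.erase v), t' u
      = t' v' + ∑ u ∈ (U.erase v).erase v', t' u := by
    rw [e1, Finset.sum_insert (Finset.notMem_erase _ _)]
  have e3 : ∑ u ∈ (U.erase v).erase v', t' u = ∑ u ∈ (U.erase v).erase v', t u := by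
    apply Finset.sum_congr rfl
    intro u hu
    exact hsame u (Finset.mem_of_mem_erase (Finset.mem_of_mem_erase hu))
      (Finset.ne_of_mem_erase (Finset.mem_of_mem_erase hu)) (Finset.ne_of_mem_erase hu)
  have e4 : ∑ u ∈ U, t u = t v + ∑ u ∈ U.erase v, t u :=
    (Finset.add_sum_erase U t hv).symm
  have e5 : ∑ u ∈ U.erase v, t u
      = (if v' ∈ U then t v' else 0) + ∑ u ∈ (U.erase v).erase v', t u := by
    by_cases h : v' ∈ U
    · rw [if_pos h, (Finset.add_sum_erase _ t (Finset.mem_erase.2 ⟨hne, h⟩))]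
    · rw [if_neg h, Finset.erase_eq_of_notMem (fun hc => h (Finset.mem_of_mem_erase hc)),
        zero_add]
  omega

/-- Summation lemma for a move with two successor nodes. -/
lemma sum_lt_two (U : Finset ℕ) (t t' : ℕ → ℕ) (v v1 v2 : ℕ) (hv : v ∈ U)
    (h12 : v1 ≠ v2) (h1v : v1 ≠ v) (h2v : v2 ≠ v)
    (hsame : ∀ u ∈ U, u ≠ v → u ≠ v1 → u ≠ v2 → t' u = t u)
    (hlt : t' v1 + t' v2 < t v + (if v1 ∈ U then t v1 else 0) + (if v2 ∈ U then t v2 else 0)) :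
    ∑ u ∈ insert v1 (insert v2 (U.erase v)), t' u < ∑ u ∈ U, t u := by
  set U0 : Finset ℕ := ((U.erase v).erase v1).erase v2 with hU0
  have e1 : insert v1 (insert v2 (U.erase v)) = insert v1 (insert v2 U0) := by
    ext u; simp [hU0]; tauto
  have e2 : ∑ u ∈ insert v1 (insert v2 (U.erase v)), t' u
      = t' v1 + (t' v2 + ∑ u ∈ U0, t' u) := by
    rw [e1, Finset.sum_insert, Finset.sum_insert]
    · simp [hU0]
    · simp [hU0, h12]
  have e3 : ∑ u ∈ U0, t' u = ∑ u ∈ U0, t u := by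
    apply Finset.sum_congr rfl
    intro u hu
    simp only [hU0, Finset.mem_erase] at hu
    exact hsame u hu.2.2.2 hu.2.2.1 hu.2.1 hu.1
  have e4 : ∑ u ∈ U, t u = t v + ∑ u ∈ U.erase v, t u :=
    (Finset.add_sum_erase U t hv).symm
  have e5 : ∑ u ∈ U.erase v, t u
      = (if v1 ∈ U then t v1 else 0) + ∑ u ∈ (U.erase v).erase v1, t u := by
    by_cases h : v1 ∈ U
    · rw [if_pos h, (Finset.add_sum_erase _ t (Finset.mem_erase.2 ⟨h1v, h⟩))]
    · rw [if_neg h, Finset.erase_eq_of_notMem (fun hc => h (Finset.mem_of_mem_erase hc)),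
        zero_add]
  have e6 : ∑ u ∈ (U.erase v).erase v1, t u
      = (if v2 ∈ U then t v2 else 0) + ∑ u ∈ U0, t u := by
    by_cases h : v2 ∈ U
    · rw [if_pos h, (Finset.add_sum_erase _ t
        (Finset.mem_erase.2 ⟨h12.symm, Finset.mem_erase.2 ⟨h2v, h⟩⟩))]
    · rw [if_neg h, zero_add, hU0, Finset.erase_eq_of_notMem
        (fun hc => h (Finset.mem_of_mem_erase (Finset.mem_of_mem_erase hc)))]
  omega

end FSFinite
namespace FSFinite

variable {P : Type}

lemma tval_congr {k : ℕ} {p q : FSPos P} {u u' : ℕ} (hE : q.E = p.E)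
    (hl : q.left u = p.left u') (hr : q.right u = p.right u') (huu : u = u') :
    tval k q u = tval k p u' := by
  subst huu
  unfold tval cmax cset ndesc
  rw [hE, hl, hr]

/-- Key comparison, tree-descent variant: the new node is a child of `v`. -/
lemma key_lt {k C : ℕ} {p q : FSPos P} {v v' : ℕ} (hI : Inv C p) (hE : q.E = p.E)
    (hup : cmax q v' ≤ max (cmax p v) (cmax p v'))
    (hlo : cmax p v' ≤ cmax q v')
    (hd : ndesc p.E v' < ndesc p.E v) :
    tval k q v' < tval k p v + (if v' ∈ p.U then tval k p v' else 0) := by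
  have hEd : ndesc q.E v' = ndesc p.E v' := by rw [hE]
  rcases le_or_gt (cmax q v') (cmax p v) with hc | hc
  · have : tval k q v' < tval k p v := by
      unfold tval
      rw [hEd]
      apply Nat.pow_lt_pow_right (by omega)
      have := Nat.mul_le_mul_left (k + 2) hc
      omega
    omega
  · have hc0 : cmax q v' = cmax p v' := by
      rcases max_cases (cmax p v) (cmax p v') with ⟨h1, _⟩ | ⟨h1, _⟩ <;> omega
    have hpos : 1 ≤ cmax p v' := by omega
    have hU : v' ∈ p.U := memU_of_cmax_pos hI hpos
    rw [if_pos hU]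
    have heq : tval k q v' = tval k p v' := by
      unfold tval; rw [hEd, hc0]
    have := tval_pos k p v
    omega

/-- Key comparison, back-edge variant: the clocks strictly decrease. -/
lemma key_ltB {k C : ℕ} {p q : FSPos P} {v v' : ℕ} (hI : Inv C p) (hE : q.E = p.E)
    (hup : cmax q v' ≤ max (cmax p v - 1) (cmax p v'))
    (hlo : cmax p v' ≤ cmax q v')
    (hc1 : 1 ≤ cmax p v)
    (hd : ndesc p.E v' ≤ k) :
    tval k q v' < tval k p v + (if v' ∈ p.U then tval k p v' else 0) := by
  have hEd : ndesc q.E v' = ndesc p.E v' := by rw [hE]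
  rcases le_or_gt (cmax q v') (cmax p v - 1) with hc | hc
  · have : tval k q v' < tval k p v := by
      unfold tval
      rw [hEd]
      apply Nat.pow_lt_pow_right (by omega)
      have h2 := Nat.mul_le_mul_left (k + 2) hc
      have h3 : (k + 2) * (cmax p v - 1) + (k + 2) = (k + 2) * cmax p v := by
        rcases Nat.exists_eq_add_of_le hc1 with ⟨c, hcc⟩
        rw [hcc]
        have hcc2 : 1 + c - 1 = c := by omega
        rw [hcc2]
        ring
      omega
    omega
  · have hc0 : cmax q v' = cmax p v' := by
      rcases max_cases (cmax p v - 1) (cmax p v') with ⟨h1, _⟩ | ⟨h1, _⟩ <;> omega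
    have hpos : 1 ≤ cmax p v' := by omega
    have hU : v' ∈ p.U := memU_of_cmax_pos hI hpos
    rw [if_pos hU]
    have heq : tval k q v' = tval k p v' := by
      unfold tval; rw [hEd, hc0]
    have := tval_pos k p v
    omega

/-- Key comparison for binary moves, per child. -/
lemma key_lt2 {k C : ℕ} {p q : FSPos P} {v vi : ℕ} (hI : Inv C p) (hE : q.E = p.E)
    (hup : cmax q vi ≤ max (cmax p v) (cmax p vi))
    (hlo : cmax p vi ≤ cmax q vi)
    (hd : ndesc p.E vi < ndesc p.E v) :
    (vi ∈ p.U ∧ tval k q vi = tval k p vi) ∨ 3 * tval k q vi ≤ tval k p v := by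
  have hEd : ndesc q.E vi = ndesc p.E vi := by rw [hE]
  rcases le_or_gt (cmax q vi) (cmax p v) with hc | hc
  · right
    have h1 : (k + 3) * tval k q vi ≤ tval k p v := by
      unfold tval
      rw [hEd]
      rw [← pow_succ']
      apply Nat.pow_le_pow_right (by omega)
      have := Nat.mul_le_mul_left (k + 2) hc
      omega
    have := Nat.mul_le_mul_right (tval k q vi) (show 3 ≤ k + 3 by omega)
    omega
  · left
    have hc0 : cmax q vi = cmax p vi := by
      rcases max_cases (cmax p v) (cmax p vi) with ⟨h1, _⟩ | ⟨h1, _⟩ <;> omega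
    have hpos : 1 ≤ cmax p vi := by omega
    refine ⟨memU_of_cmax_pos hI hpos, ?_⟩
    unfold tval; rw [hEd, hc0]

/-- Root count does not decrease when the forest grows reasonably. -/
lemma roots_card_le {p q : FSPos P} (hV : p.V ⊆ q.V)
    (hcond : ∀ w u, u ∈ p.V → (w, u) ∈ q.E → w ∈ p.V ∧ (w, u) ∈ p.E) :
    (p.V.filter fun v => ∀ u ∈ p.V, (u, v) ∉ p.E).card ≤
      (q.V.filter fun v => ∀ u ∈ q.V, (u, v) ∉ q.E).card := by
  apply Finset.card_le_card
  intro u hu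
  rw [Finset.mem_filter] at hu ⊢
  refine ⟨hV hu.1, ?_⟩
  intro w _ hwu
  rcases hcond w u hu.1 hwu with ⟨hw, he⟩
  exact hu.2 w hw he

/-- Size strictly grows when a fresh node is added. -/
lemma size_lt_of_fresh {p q : FSPos P} {v' : ℕ} (hV : p.V ⊆ q.V) (hv'q : v' ∈ q.V)
    (hv' : v' ∉ p.V) (hw : ∀ u ∈ p.V, wt p u ≤ wt q u) (hw' : 1 ≤ wt q v')
    (hcond : ∀ w u, u ∈ p.V → (w, u) ∈ q.E → w ∈ p.V ∧ (w, u) ∈ p.E) :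
    p.size < q.size := by
  rw [size_eq p, size_eq q]
  have h1 : (q.V.sum fun u => wt q u) ≥ ((insert v' p.V).sum fun u => wt q u) := by
    apply Finset.sum_le_sum_of_subset
    intro u hu
    rcases Finset.mem_insert.1 hu with rfl | hu
    · exact hv'q
    · exact hV hu
  rw [Finset.sum_insert hv'] at h1
  have h2 : (p.V.sum fun u => wt p u) ≤ (p.V.sum fun u => wt q u) :=
    Finset.sum_le_sum hw
  have h3 := roots_card_le hV hcond
  omega

/-- Arithmetic for the measure: reuse case. -/
lemma mu_arith_reuse {k C : ℕ} {p q : FSPos P} (hsz : q.size = p.size)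
    (hin : innerM k q < innerM k p) :
    slack k q * BIG k C + 8 * innerM k q + 5 < slack k p * BIG k C + 8 * innerM k p + 2 := by
  have : slack k q = slack k p := by unfold slack; rw [hsz]
  rw [this]
  omega

/-- Arithmetic for the measure: fresh-node case. -/
lemma mu_arith_fresh {k C : ℕ} {p q : FSPos P} (hszp : p.size ≤ k) (hszq : p.size < q.size)
    (hin : innerM k q ≤ IB2 k C) :
    slack k q * BIG k C + 8 * innerM k q + 5 < slack k p * BIG k C + 8 * innerM k p + 2 := by
  have h1 : slack k q + 1 ≤ slack k p := by unfold slack; omega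
  have h2 : slack k q * BIG k C + BIG k C ≤ slack k p * BIG k C := by
    calc slack k q * BIG k C + BIG k C = (slack k q + 1) * BIG k C := by ring
    _ ≤ _ := Nat.mul_le_mul_right _ h1
  have h3 : BIG k C = 8 * IB2 k C + 10 := rfl
  omega

end FSFinite
namespace FSFinite

variable {P : Type}

lemma baseFun_clock {mk : ModKind} {y z : CModel P} (hz : z ∈ mk.baseFun y) : z.2 = y.2 := by
  unfold ModKind.baseFun at hz
  split at hz
  · rcases hz with ⟨w', _, rfl⟩; rfl
  · rcases hz with ⟨w', rfl⟩; rfl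

lemma label_cost_pos {m : ℕ} (mk : ModKind) (hm : 0 < m) :
    1 ≤ FSLabel.cost (P := P) (mk.label m) := by
  cases mk <;> simp [ModKind.label, FSLabel.cost] <;> omega

/-- The measure on game positions. -/
noncomputable def mu (k C : ℕ) : GPos P → ℕ
  | .main p => slack k p * BIG k C + 8 * innerM k p + 5
  | .atNode p _ => slack k p * BIG k C + 8 * innerM k p + 4
  | .xchal p _ _ => slack k p * BIG k C + 8 * innerM k p + 3
  | .modalD p _ _ _ _ _ => slack k p * BIG k C + 8 * innerM k p + 3
  | .modalS p _ _ _ _ _ _ _ _ => slack k p * BIG k C + 8 * innerM k p + 2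
  | _ => 0

/-- The conditions maintained along a play after the setup move. -/
def Good (k C : ℕ) : GPos P → Prop
  | .main p => Inv C p
  | .atNode p v => Inv C p ∧ p.size ≤ k ∧ v ∈ p.U
  | .modalD p v _ mk m f => Inv C p ∧ p.size ≤ k ∧ v ∈ p.U ∧ 0 < m ∧
      ∀ x ∈ (if mk.samsonLeft then p.left v else p.right v), f x ⊆ mk.baseFun x
  | .modalS p v _ _ m _ D h chosen => Inv C p ∧ p.size ≤ k ∧ v ∈ p.U ∧ 0 < m ∧
      (∀ x ∈ chosen, x.2 ≤ cmax p v) ∧ (∀ y ∈ D, ∀ z ∈ h y, z.2 ≤ cmax p v)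
  | .xchal p v X => Inv C p ∧ p.size ≤ k ∧ v ∈ p.U ∧
      (p.lab v = none ∨ p.lab v = some (.var X))
  | _ => False

/-- Completing a unary move decreases the measure and preserves the invariant. -/
lemma extend1_dec {k C : ℕ} {p q : FSPos P} {v v' : ℕ} {μ : FSLabel P}
    {Lnew Rnew : Set (CModel P)}
    (hI : Inv C p) (hsz : p.size ≤ k) (hvU : v ∈ p.U)
    (hext : extend1 p q v v' μ Lnew Rnew) (hμ : 1 ≤ FSLabel.cost μ)
    (hL : ∀ x ∈ Lnew, x.2 ≤ cmax p v) (hR : ∀ x ∈ Rnew, x.2 ≤ cmax p v) :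
    Inv C q ∧
      slack k q * BIG k C + 8 * innerM k q + 5 <
        slack k p * BIG k C + 8 * innerM k p + 2 := by
  obtain ⟨hne, hcase, hB, hU, hleft, hright⟩ := hext
  have hql' : q.left v' = Lnew ∪ p.left v' := by rw [hleft]; simp
  have hqr' : q.right v' = Rnew ∪ p.right v' := by rw [hright]; simp
  have hqlv : q.left v = ∅ := by
    rw [hleft, Function.update_of_ne (Ne.symm hne), Function.update_self]
  have hqrv : q.right v = ∅ := by
    rw [hright, Function.update_of_ne (Ne.symm hne), Function.update_self]
  have hqlu : ∀ u, u ≠ v → u ≠ v' → q.left u = p.left u := by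
    intro u h1 h2
    rw [hleft, Function.update_of_ne h2, Function.update_of_ne h1]
  have hqru : ∀ u, u ≠ v → u ≠ v' → q.right u = p.right u := by
    intro u h1 h2
    rw [hright, Function.update_of_ne h2, Function.update_of_ne h1]
  have hcm_up : cmax q v' ≤ max (cmax p v) (cmax p v') := by
    apply cmax_le
    intro x hx
    rcases hx with hx | hx
    · rw [hql'] at hx
      rcases hx with hx | hx
      · exact le_trans (hL x hx) (le_max_left _ _)
      · exact le_trans (le_cmax p v' (Or.inl hx)) (le_max_right _ _)
    · rw [hqr'] at hx
      rcases hx with hx | hx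
      · exact le_trans (hR x hx) (le_max_left _ _)
      · exact le_trans (le_cmax p v' (Or.inr hx)) (le_max_right _ _)
  have hcm_lo : cmax p v' ≤ cmax q v' := by
    apply cmax_le
    intro x hx
    apply le_cmax q v'
    rcases hx with hx | hx
    · exact Or.inl (by rw [hql']; exact Or.inr hx)
    · exact Or.inr (by rw [hqr']; exact Or.inr hx)
  have hclkv' : ∀ x : CModel P, (x ∈ q.left v' ∨ x ∈ q.right v') → x.2 ≤ C := by
    intro x hx
    rcases hx with hx | hx
    · rw [hql'] at hx
      rcases hx with hx | hx
      · exact le_trans (hL x hx) (cmax_le_C hI v)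
      · exact hI.hclk v' x (Or.inl hx)
    · rw [hqr'] at hx
      rcases hx with hx | hx
      · exact le_trans (hR x hx) (cmax_le_C hI v)
      · exact hI.hclk v' x (Or.inr hx)
  have hzeroq : ∀ u, u ∉ q.U → ∀ x : CModel P, (x ∈ q.left u ∨ x ∈ q.right u) → x.2 = 0 := by
    intro u hu x hx
    by_cases h1 : u = v
    · subst h1
      rw [hqlv, hqrv] at hx
      simp at hx
    · have h2 : u ≠ v' := by
        intro h; subst h; exact hu (by rw [hU]; exact Finset.mem_insert_self _ _)
      rw [hqlu u h1 h2, hqru u h1 h2] at hx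
      apply hI.hzero u _ x hx
      intro hup
      exact hu (by rw [hU]; exact Finset.mem_insert_of_mem (Finset.mem_erase.2 ⟨h1, hup⟩))
  have hclkq : ∀ u, ∀ x : CModel P, (x ∈ q.left u ∨ x ∈ q.right u) → x.2 ≤ C := by
    intro u x hx
    by_cases h1 : u = v
    · subst h1; rw [hqlv, hqrv] at hx; simp at hx
    · by_cases h2 : u = v'
      · subst h2; exact hclkv' x hx
      · rw [hqlu u h1 h2, hqru u h1 h2] at hx
        exact hI.hclk u x hx
  rcases hcase with ⟨hlabv, hv'V, hV, hE, hlab, hrho⟩ | ⟨hlabv, hedge, hV, hE, hlab, hrho⟩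
  · -- fresh node case
    have hvV : v ∈ p.V := hI.hUV v hvU
    have hnvv' : v ≠ v' := fun h => hv'V (h ▸ hvV)
    have hInvq : Inv C q := by
      constructor
      · intro u hu
        rw [hU] at hu
        rw [hV]
        rcases Finset.mem_insert.1 hu with rfl | hu
        · exact Finset.mem_insert_self _ _
        · exact Finset.mem_insert_of_mem (hI.hUV u (Finset.mem_of_mem_erase hu))
      · intro e he
        rw [hE] at he
        rw [hV]
        rcases Finset.mem_insert.1 he with rfl | he
        · exact ⟨Finset.mem_insert_of_mem hvV, Finset.mem_insert_self _ _⟩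
        · exact ⟨Finset.mem_insert_of_mem (hI.hEV e he).1,
            Finset.mem_insert_of_mem (hI.hEV e he).2⟩
      · rw [hE]
        exact acyclic_insert hnvv' (fun e he h => hv'V (h ▸ (hI.hEV e he).1)) hI.hac
      · exact hzeroq
      · exact hclkq
      · intro u μ' hμ'
        rw [hlab] at hμ'
        by_cases h1 : u = v
        · subst h1
          rw [Function.update_self] at hμ'
          cases hμ'
          exact hμ
        · rw [Function.update_of_ne h1] at hμ'
          exact hI.hcost u μ' hμ'
    refine ⟨hInvq, ?_⟩
    apply mu_arith_fresh hsz
    · apply size_lt_of_fresh (p := p) (q := q) (v' := v')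
      · rw [hV]; exact Finset.subset_insert _ _
      · rw [hV]; exact Finset.mem_insert_self _ _
      · exact hv'V
      · intro u hu
        unfold wt
        rw [hlab]
        by_cases h1 : u = v
        · subst h1
          rw [Function.update_self, hlabv]
          simpa using hμ
        · rw [Function.update_of_ne h1]
      · unfold wt
        rw [hlab, Function.update_of_ne (Ne.symm hnvv')]
        cases hl : p.lab v' with
        | none => simp
        | some μ' => simpa using hI.hcost v' μ' hl
      · intro w u hu hwu
        rw [hE] at hwu
        rcases Finset.mem_insert.1 hwu with h | h
        · exfalso
          have h2 : u = v' := (Prod.ext_iff.1 h).2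
          exact hv'V (h2 ▸ hu)
        · exact ⟨(hI.hEV _ h).1, h⟩
    · apply innerM_le hInvq
      rw [hV]
      have h1 : (insert v' p.V).card ≤ p.V.card + 1 := Finset.card_insert_le _ _
      have h2 := cardV_le_size hI
      omega
  · -- reuse case
    have hv'V : v' ∈ p.V := (hI.hEV _ hedge).2
    have hInvq : Inv C q := by
      constructor
      · intro u hu
        rw [hU] at hu
        rw [hV]
        rcases Finset.mem_insert.1 hu with rfl | hu
        · exact hv'V
        · exact hI.hUV u (Finset.mem_of_mem_erase hu)
      · intro e he
        rw [hE] at he; rw [hV]; exact hI.hEV e he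
      · rw [hE]; exact hI.hac
      · exact hzeroq
      · exact hclkq
      · intro u μ' hμ'
        rw [hlab] at hμ'
        exact hI.hcost u μ' hμ'
    refine ⟨hInvq, ?_⟩
    apply mu_arith_reuse
    · rw [size_eq q, size_eq p, hV, hE]
      congr 1
      apply Finset.sum_congr rfl
      intro u _
      unfold wt
      rw [hlab]
    · unfold innerM
      rw [hU]
      apply sum_lt_one p.U (tval k p) (tval k q) v v' hvU hne
      · intro u hu h1 h2
        exact tval_congr hE (hqlu u h1 h2) (hqru u h1 h2) rfl
      · have hd := ndesc_lt_of_edge hI.hEV hI.hac hedge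
        have hq' : cmax q v' ≤ max (cmax p v) (cmax p v') := hcm_up
        exact key_lt hI hE hq' hcm_lo hd

end FSFinite
namespace FSFinite

variable {P : Type}

/-- Completing a binary move decreases the measure and preserves the invariant. -/
lemma extend2_dec {k C : ℕ} {p q : FSPos P} {v v1 v2 : ℕ} {μ : FSLabel P}
    {L1 L2 R1 R2 : Set (CModel P)}
    (hI : Inv C p) (hsz : p.size ≤ k) (hvU : v ∈ p.U)
    (hext : extend2 p q v v1 v2 μ L1 L2 R1 R2) (hμ : 1 ≤ FSLabel.cost μ)
    (hL1 : ∀ x ∈ L1, x.2 ≤ cmax p v) (hR1 : ∀ x ∈ R1, x.2 ≤ cmax p v)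
    (hL2 : ∀ x ∈ L2, x.2 ≤ cmax p v) (hR2 : ∀ x ∈ R2, x.2 ≤ cmax p v) :
    Inv C q ∧
      slack k q * BIG k C + 8 * innerM k q + 5 <
        slack k p * BIG k C + 8 * innerM k p + 2 := by
  obtain ⟨h12, h1v, h2v, hcase, hB, hU, hleft, hright⟩ := hext
  have hql1 : q.left v1 = L1 ∪ p.left v1 := by
    rw [hleft, Function.update_of_ne h12, Function.update_self]
  have hql2 : q.left v2 = L2 ∪ p.left v2 := by rw [hleft]; simp
  have hqr1 : q.right v1 = R1 ∪ p.right v1 := by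
    rw [hright, Function.update_of_ne h12, Function.update_self]
  have hqr2 : q.right v2 = R2 ∪ p.right v2 := by rw [hright]; simp
  have hqlv : q.left v = ∅ := by
    rw [hleft, Function.update_of_ne (Ne.symm h2v), Function.update_of_ne (Ne.symm h1v),
      Function.update_self]
  have hqrv : q.right v = ∅ := by
    rw [hright, Function.update_of_ne (Ne.symm h2v), Function.update_of_ne (Ne.symm h1v),
      Function.update_self]
  have hqlu : ∀ u, u ≠ v → u ≠ v1 → u ≠ v2 → q.left u = p.left u := by
    intro u h1 h2 h3
    rw [hleft, Function.update_of_ne h3, Function.update_of_ne h2, Function.update_of_ne h1]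
  have hqru : ∀ u, u ≠ v → u ≠ v1 → u ≠ v2 → q.right u = p.right u := by
    intro u h1 h2 h3
    rw [hright, Function.update_of_ne h3, Function.update_of_ne h2, Function.update_of_ne h1]
  have hcm_up1 : cmax q v1 ≤ max (cmax p v) (cmax p v1) := by
    apply cmax_le
    intro x hx
    rcases hx with hx | hx
    · rw [hql1] at hx
      rcases hx with hx | hx
      · exact le_trans (hL1 x hx) (le_max_left _ _)
      · exact le_trans (le_cmax p v1 (Or.inl hx)) (le_max_right _ _)
    · rw [hqr1] at hx
      rcases hx with hx | hx
      · exact le_trans (hR1 x hx) (le_max_left _ _)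
      · exact le_trans (le_cmax p v1 (Or.inr hx)) (le_max_right _ _)
  have hcm_up2 : cmax q v2 ≤ max (cmax p v) (cmax p v2) := by
    apply cmax_le
    intro x hx
    rcases hx with hx | hx
    · rw [hql2] at hx
      rcases hx with hx | hx
      · exact le_trans (hL2 x hx) (le_max_left _ _)
      · exact le_trans (le_cmax p v2 (Or.inl hx)) (le_max_right _ _)
    · rw [hqr2] at hx
      rcases hx with hx | hx
      · exact le_trans (hR2 x hx) (le_max_left _ _)
      · exact le_trans (le_cmax p v2 (Or.inr hx)) (le_max_right _ _)
  have hcm_lo1 : cmax p v1 ≤ cmax q v1 := by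
    apply cmax_le
    intro x hx
    apply le_cmax q v1
    rcases hx with hx | hx
    · exact Or.inl (by rw [hql1]; exact Or.inr hx)
    · exact Or.inr (by rw [hqr1]; exact Or.inr hx)
  have hcm_lo2 : cmax p v2 ≤ cmax q v2 := by
    apply cmax_le
    intro x hx
    apply le_cmax q v2
    rcases hx with hx | hx
    · exact Or.inl (by rw [hql2]; exact Or.inr hx)
    · exact Or.inr (by rw [hqr2]; exact Or.inr hx)
  have hzeroq : ∀ u, u ∉ q.U → ∀ x : CModel P, (x ∈ q.left u ∨ x ∈ q.right u) → x.2 = 0 := by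
    intro u hu x hx
    by_cases h1 : u = v
    · subst h1; rw [hqlv, hqrv] at hx; simp at hx
    · have h2 : u ≠ v1 := by
        intro h; subst h; exact hu (by rw [hU]; exact Finset.mem_insert_self _ _)
      have h3 : u ≠ v2 := by
        intro h; subst h
        exact hu (by rw [hU]; exact Finset.mem_insert_of_mem (Finset.mem_insert_self _ _))
      rw [hqlu u h1 h2 h3, hqru u h1 h2 h3] at hx
      apply hI.hzero u _ x hx
      intro hup
      exact hu (by
        rw [hU]
        exact Finset.mem_insert_of_mem
          (Finset.mem_insert_of_mem (Finset.mem_erase.2 ⟨h1, hup⟩)))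
  have hclkq : ∀ u, ∀ x : CModel P, (x ∈ q.left u ∨ x ∈ q.right u) → x.2 ≤ C := by
    intro u x hx
    by_cases h1 : u = v
    · subst h1; rw [hqlv, hqrv] at hx; simp at hx
    · by_cases h2 : u = v1
      · subst h2
        have := le_trans (le_cmax q u hx) hcm_up1
        have hc1 := cmax_le_C hI v
        have hc2 := cmax_le_C hI u
        omega
      · by_cases h3 : u = v2
        · subst h3
          have := le_trans (le_cmax q u hx) hcm_up2
          have hc1 := cmax_le_C hI v
          have hc2 := cmax_le_C hI u
          omega
        · rw [hqlu u h1 h2 h3, hqru u h1 h2 h3] at hx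
          exact hI.hclk u x hx
  rcases hcase with ⟨hlabv, hv1V, hv2V, hV, hE, hlab, hrho⟩ |
    ⟨hlabv, hedge1, hedge2, hV, hE, hlab, hrho⟩
  · -- fresh nodes case
    have hvV : v ∈ p.V := hI.hUV v hvU
    have hnv1 : v ≠ v1 := fun h => hv1V (h ▸ hvV)
    have hnv2 : v ≠ v2 := fun h => hv2V (h ▸ hvV)
    have hInvq : Inv C q := by
      constructor
      · intro u hu
        rw [hU] at hu
        rw [hV]
        rcases Finset.mem_insert.1 hu with rfl | hu
        · exact Finset.mem_insert_self _ _
        · rcases Finset.mem_insert.1 hu with rfl | hu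
          · exact Finset.mem_insert_of_mem (Finset.mem_insert_self _ _)
          · exact Finset.mem_insert_of_mem (Finset.mem_insert_of_mem
              (hI.hUV u (Finset.mem_of_mem_erase hu)))
      · intro e he
        rw [hE] at he
        rw [hV]
        rcases Finset.mem_insert.1 he with rfl | he
        · exact ⟨Finset.mem_insert_of_mem (Finset.mem_insert_of_mem hvV),
            Finset.mem_insert_self _ _⟩
        · rcases Finset.mem_insert.1 he with rfl | he
          · exact ⟨Finset.mem_insert_of_mem (Finset.mem_insert_of_mem hvV),
              Finset.mem_insert_of_mem (Finset.mem_insert_self _ _)⟩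
          · exact ⟨Finset.mem_insert_of_mem (Finset.mem_insert_of_mem (hI.hEV e he).1),
              Finset.mem_insert_of_mem (Finset.mem_insert_of_mem (hI.hEV e he).2)⟩
      · rw [hE]
        apply acyclic_insert hnv1
        · intro e he h
          rcases Finset.mem_insert.1 he with rfl | he
          · exact hnv1 h
          · exact hv1V (h ▸ (hI.hEV e he).1)
        · exact acyclic_insert hnv2 (fun e he h => hv2V (h ▸ (hI.hEV e he).1)) hI.hac
      · exact hzeroq
      · exact hclkq
      · intro u μ' hμ'
        rw [hlab] at hμ'
        by_cases h1 : u = v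
        · subst h1
          rw [Function.update_self] at hμ'
          cases hμ'
          exact hμ
        · rw [Function.update_of_ne h1] at hμ'
          exact hI.hcost u μ' hμ'
    refine ⟨hInvq, ?_⟩
    apply mu_arith_fresh hsz
    · apply size_lt_of_fresh (p := p) (q := q) (v' := v1)
      · rw [hV]
        exact fun u hu => Finset.mem_insert_of_mem (Finset.mem_insert_of_mem hu)
      · rw [hV]; exact Finset.mem_insert_self _ _
      · exact hv1V
      · intro u hu
        unfold wt
        rw [hlab]
        by_cases h1 : u = v
        · subst h1
          rw [Function.update_self, hlabv]
          simpa using hμ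
        · rw [Function.update_of_ne h1]
      · unfold wt
        rw [hlab, Function.update_of_ne (Ne.symm hnv1)]
        cases hl : p.lab v1 with
        | none => simp
        | some μ' => simpa using hI.hcost v1 μ' hl
      · intro w u hu hwu
        rw [hE] at hwu
        rcases Finset.mem_insert.1 hwu with h | h
        · have h2 : u = v1 := (Prod.ext_iff.1 h).2
          exact absurd (h2 ▸ hu) hv1V
        · rcases Finset.mem_insert.1 h with h | h
          · have h2 : u = v2 := (Prod.ext_iff.1 h).2
            exact absurd (h2 ▸ hu) hv2V
          · exact ⟨(hI.hEV _ h).1, h⟩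
    · apply innerM_le hInvq
      rw [hV]
      have h1 : (insert v1 (insert v2 p.V)).card ≤ p.V.card + 2 := by
        calc (insert v1 (insert v2 p.V)).card ≤ (insert v2 p.V).card + 1 :=
          Finset.card_insert_le _ _
        _ ≤ p.V.card + 2 := by
            have := Finset.card_insert_le v2 p.V
            omega
      have h2 := cardV_le_size hI
      omega
  · -- reuse case
    have hv1V : v1 ∈ p.V := (hI.hEV _ hedge1).2
    have hInvq : Inv C q := by
      constructor
      · intro u hu
        rw [hU] at hu
        rw [hV]
        rcases Finset.mem_insert.1 hu with rfl | hu
        · exact hv1V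
        · rcases Finset.mem_insert.1 hu with rfl | hu
          · exact (hI.hEV _ hedge2).2
          · exact hI.hUV u (Finset.mem_of_mem_erase hu)
      · intro e he
        rw [hE] at he; rw [hV]; exact hI.hEV e he
      · rw [hE]; exact hI.hac
      · exact hzeroq
      · exact hclkq
      · intro u μ' hμ'
        rw [hlab] at hμ'
        exact hI.hcost u μ' hμ'
    refine ⟨hInvq, ?_⟩
    apply mu_arith_reuse
    · rw [size_eq q, size_eq p, hV, hE]
      congr 1
      apply Finset.sum_congr rfl
      intro u _
      unfold wt
      rw [hlab]
    · unfold innerM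
      rw [hU]
      apply sum_lt_two p.U (tval k p) (tval k q) v v1 v2 hvU h12 h1v h2v
      · intro u hu h1 h2 h3
        exact tval_congr hE (hqlu u h1 h2 h3) (hqru u h1 h2 h3) rfl
      · have hd1 := ndesc_lt_of_edge hI.hEV hI.hac hedge1
        have hd2 := ndesc_lt_of_edge hI.hEV hI.hac hedge2
        have k1 := key_lt2 (k := k) hI hE hcm_up1 hcm_lo1 hd1
        have k2 := key_lt2 (k := k) hI hE hcm_up2 hcm_lo2 hd2
        have htv := tval_pos k p v
        set i1 := (if v1 ∈ p.U then tval k p v1 else 0) with hi1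
        set i2 := (if v2 ∈ p.U then tval k p v2 else 0) with hi2
        rcases k1 with ⟨hm1, he1⟩ | hb1
        · have e1 : i1 = tval k p v1 := by rw [hi1, if_pos hm1]
          rcases k2 with ⟨hm2, he2⟩ | hb2
          · have e2 : i2 = tval k p v2 := by rw [hi2, if_pos hm2]
            omega
          · omega
        · rcases k2 with ⟨hm2, he2⟩ | hb2
          · have e2 : i2 = tval k p v2 := by rw [hi2, if_pos hm2]
            omega
          · omega

end FSFinite
namespace FSFinite

variable {P : Type}

lemma wt_var {p q : FSPos P} {v : ℕ} {X : ℕ}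
    (hlab : q.lab = Function.update p.lab v (some (.var X)))
    (hlabv : p.lab v = none ∨ p.lab v = some (.var X)) :
    ∀ u ∈ p.V, wt p u = wt q u := by
  intro u _
  unfold wt
  rw [hlab]
  by_cases h1 : u = v
  · subst h1
    rw [Function.update_self]
    rcases hlabv with h | h <;> rw [h] <;> simp [FSLabel.cost]
  · rw [Function.update_of_ne h1]

/-- The X-move without challenge decreases the measure. -/
lemma xNoChal_dec {k C : ℕ} {p q : FSPos P} {v v' : ℕ} {X : ℕ}
    (hI : Inv C p) (hsz : p.size ≤ k) (hvU : v ∈ p.U)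
    (hlabv : p.lab v = none ∨ p.lab v = some (.var X))
    (hnei : ¬ (iterC (p.left v) = ∅ ∧ iterC (p.right v) = ∅))
    (hext : extendX p q v v' X false
      (iterC (p.left v) ∪ p.left v') (iterC (p.right v) ∪ p.right v')
      (initC (p.left v)) (initC (p.right v))) :
    Inv C q ∧
      slack k q * BIG k C + 8 * innerM k q + 5 <
        slack k p * BIG k C + 8 * innerM k p + 2 := by
  obtain ⟨hne, hcase, hE, hB, hlab, hU, hleft, hright⟩ := hext
  have hql' : q.left v' = iterC (p.left v) ∪ p.left v' := by rw [hleft]; simp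
  have hqr' : q.right v' = iterC (p.right v) ∪ p.right v' := by rw [hright]; simp
  have hqlv : q.left v = initC (p.left v) := by
    rw [hleft, Function.update_of_ne (Ne.symm hne), Function.update_self]
  have hqrv : q.right v = initC (p.right v) := by
    rw [hright, Function.update_of_ne (Ne.symm hne), Function.update_self]
  have hqlu : ∀ u, u ≠ v → u ≠ v' → q.left u = p.left u := by
    intro u h1 h2
    rw [hleft, Function.update_of_ne h2, Function.update_of_ne h1]
  have hqru : ∀ u, u ≠ v → u ≠ v' → q.right u = p.right u := by
    intro u h1 h2
    rw [hright, Function.update_of_ne h2, Function.update_of_ne h1]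
  have hc1 : 1 ≤ cmax p v := by
    rcases not_and_or.1 hnei with h | h
    · rcases Set.nonempty_iff_ne_empty.2 h with ⟨x, hx⟩
      have := le_cmax p v (Or.inl (hx : (x.1, x.2 + 1) ∈ p.left v))
      omega
    · rcases Set.nonempty_iff_ne_empty.2 h with ⟨x, hx⟩
      have := le_cmax p v (Or.inr (hx : (x.1, x.2 + 1) ∈ p.right v))
      omega
  have hcm_up : cmax q v' ≤ max (cmax p v - 1) (cmax p v') := by
    apply cmax_le
    intro x hx
    rcases hx with hx | hx
    · rw [hql'] at hx
      rcases hx with hx | hx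
      · have := le_cmax p v (Or.inl (hx : (x.1, x.2 + 1) ∈ p.left v))
        have h2 : x.2 ≤ cmax p v - 1 := by omega
        exact le_trans h2 (le_max_left _ _)
      · exact le_trans (le_cmax p v' (Or.inl hx)) (le_max_right _ _)
    · rw [hqr'] at hx
      rcases hx with hx | hx
      · have := le_cmax p v (Or.inr (hx : (x.1, x.2 + 1) ∈ p.right v))
        have h2 : x.2 ≤ cmax p v - 1 := by omega
        exact le_trans h2 (le_max_left _ _)
      · exact le_trans (le_cmax p v' (Or.inr hx)) (le_max_right _ _)
  have hcm_lo : cmax p v' ≤ cmax q v' := by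
    apply cmax_le
    intro x hx
    apply le_cmax q v'
    rcases hx with hx | hx
    · exact Or.inl (by rw [hql']; exact Or.inr hx)
    · exact Or.inr (by rw [hqr']; exact Or.inr hx)
  have hzeroq : ∀ u, u ∉ q.U → ∀ x : CModel P, (x ∈ q.left u ∨ x ∈ q.right u) → x.2 = 0 := by
    intro u hu x hx
    by_cases h1 : u = v
    · subst h1
      rw [hqlv, hqrv] at hx
      rcases hx with hx | hx
      · exact hx.2
      · exact hx.2
    · have h2 : u ≠ v' := by
        intro h; subst h; exact hu (by rw [hU]; exact Finset.mem_insert_self _ _)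
      rw [hqlu u h1 h2, hqru u h1 h2] at hx
      apply hI.hzero u _ x hx
      intro hup
      exact hu (by rw [hU]; exact Finset.mem_insert_of_mem (Finset.mem_erase.2 ⟨h1, hup⟩))
  have hclkq : ∀ u, ∀ x : CModel P, (x ∈ q.left u ∨ x ∈ q.right u) → x.2 ≤ C := by
    intro u x hx
    by_cases h1 : u = v
    · subst h1
      rw [hqlv, hqrv] at hx
      rcases hx with hx | hx
      · exact hI.hclk u x (Or.inl hx.1)
      · exact hI.hclk u x (Or.inr hx.1)
    · by_cases h2 : u = v'
      · subst h2
        rcases hx with hx | hx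
        · rw [hql'] at hx
          rcases hx with hx | hx
          · have := hI.hclk v (x.1, x.2 + 1) (Or.inl hx)
            omega
          · exact hI.hclk u x (Or.inl hx)
        · rw [hqr'] at hx
          rcases hx with hx | hx
          · have := hI.hclk v (x.1, x.2 + 1) (Or.inr hx)
            omega
          · exact hI.hclk u x (Or.inr hx)
      · rw [hqlu u h1 h2, hqru u h1 h2] at hx
        exact hI.hclk u x hx
  have hcostq : ∀ u μ', q.lab u = some μ' → 1 ≤ FSLabel.cost μ' := by
    intro u μ' hμ'
    rw [hlab] at hμ'
    by_cases h1 : u = v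
    · subst h1
      rw [Function.update_self] at hμ'
      cases hμ'
      simp [FSLabel.cost]
    · rw [Function.update_of_ne h1] at hμ'
      exact hI.hcost u μ' hμ'
  rcases hcase with ⟨hv'V, hrhov, hV, hrho⟩ | ⟨hv'V, hV, hrho⟩
  · -- target node already exists
    have hInvq : Inv C q := by
      constructor
      · intro u hu
        rw [hU] at hu
        rw [hV]
        rcases Finset.mem_insert.1 hu with rfl | hu
        · exact hv'V
        · exact hI.hUV u (Finset.mem_of_mem_erase hu)
      · intro e he; rw [hE] at he; rw [hV]; exact hI.hEV e he
      · rw [hE]; exact hI.hac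
      · exact hzeroq
      · exact hclkq
      · exact hcostq
    refine ⟨hInvq, ?_⟩
    apply mu_arith_reuse
    · rw [size_eq q, size_eq p, hV, hE]
      congr 1
      exact (Finset.sum_congr rfl (wt_var hlab hlabv)).symm
    · unfold innerM
      rw [hU]
      apply sum_lt_one p.U (tval k p) (tval k q) v v' hvU hne
      · intro u hu h1 h2
        exact tval_congr hE (hqlu u h1 h2) (hqru u h1 h2) rfl
      · have hd : ndesc p.E v' ≤ k :=
          le_trans (ndesc_le hI.hEV v') (le_trans (cardV_le_size hI) hsz)
        exact key_ltB hI hE hcm_up hcm_lo hc1 hd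
  · -- fresh target node
    have hvV : v ∈ p.V := hI.hUV v hvU
    have hInvq : Inv C q := by
      constructor
      · intro u hu
        rw [hU] at hu
        rw [hV]
        rcases Finset.mem_insert.1 hu with rfl | hu
        · exact Finset.mem_insert_self _ _
        · exact Finset.mem_insert_of_mem (hI.hUV u (Finset.mem_of_mem_erase hu))
      · intro e he
        rw [hE] at he
        rw [hV]
        exact ⟨Finset.mem_insert_of_mem (hI.hEV e he).1,
          Finset.mem_insert_of_mem (hI.hEV e he).2⟩
      · rw [hE]; exact hI.hac
      · exact hzeroq
      · exact hclkq
      · exact hcostq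
    refine ⟨hInvq, ?_⟩
    apply mu_arith_fresh hsz
    · apply size_lt_of_fresh (p := p) (q := q) (v' := v')
      · rw [hV]; exact Finset.subset_insert _ _
      · rw [hV]; exact Finset.mem_insert_self _ _
      · exact hv'V
      · exact fun u hu => le_of_eq (wt_var hlab hlabv u hu)
      · unfold wt
        rw [hlab, Function.update_of_ne hne]
        cases hl : p.lab v' with
        | none => simp
        | some μ' => simpa using hI.hcost v' μ' hl
      · intro w u hu hwu
        rw [hE] at hwu
        exact ⟨(hI.hEV _ hwu).1, hwu⟩
    · apply innerM_le hInvq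
      rw [hV]
      have h1 : (insert v' p.V).card ≤ p.V.card + 1 := Finset.card_insert_le _ _
      have h2 := cardV_le_size hI
      omega

/-- The challenged X-move decreases the measure. -/
lemma xChal_dec {k C : ℕ} {p q : FSPos P} {v v' : ℕ} {X : ℕ}
    (hI : Inv C p) (hsz : p.size ≤ k) (hvU : v ∈ p.U)
    (hlabv : p.lab v = none ∨ p.lab v = some (.var X))
    (hfresh : v' ∉ p.V)
    (hext : extendX p q v v' X true (initC (p.left v)) (initC (p.right v)) ∅ ∅) :
    Inv C q ∧
      slack k q * BIG k C + 8 * innerM k q + 5 <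
        slack k p * BIG k C + 8 * innerM k p + 2 := by
  obtain ⟨hne, hcase, hE, hB, hlab, hU, hleft, hright⟩ := hext
  have hql' : q.left v' = initC (p.left v) := by rw [hleft]; simp
  have hqr' : q.right v' = initC (p.right v) := by rw [hright]; simp
  have hqlv : q.left v = ∅ := by
    rw [hleft, Function.update_of_ne (Ne.symm hne), Function.update_self]
  have hqrv : q.right v = ∅ := by
    rw [hright, Function.update_of_ne (Ne.symm hne), Function.update_self]
  have hqlu : ∀ u, u ≠ v → u ≠ v' → q.left u = p.left u := by
    intro u h1 h2
    rw [hleft, Function.update_of_ne h2, Function.update_of_ne h1]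
  have hqru : ∀ u, u ≠ v → u ≠ v' → q.right u = p.right u := by
    intro u h1 h2
    rw [hright, Function.update_of_ne h2, Function.update_of_ne h1]
  have hzeroq : ∀ u, u ∉ q.U → ∀ x : CModel P, (x ∈ q.left u ∨ x ∈ q.right u) → x.2 = 0 := by
    intro u hu x hx
    by_cases h1 : u = v
    · subst h1; rw [hqlv, hqrv] at hx; simp at hx
    · have h2 : u ≠ v' := by
        intro h; subst h; exact hu (by rw [hU]; exact Finset.mem_insert_self _ _)
      rw [hqlu u h1 h2, hqru u h1 h2] at hx
      apply hI.hzero u _ x hx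
      intro hup
      exact hu (by rw [hU]; exact Finset.mem_insert_of_mem (Finset.mem_erase.2 ⟨h1, hup⟩))
  have hclkq : ∀ u, ∀ x : CModel P, (x ∈ q.left u ∨ x ∈ q.right u) → x.2 ≤ C := by
    intro u x hx
    by_cases h1 : u = v
    · subst h1; rw [hqlv, hqrv] at hx; simp at hx
    · by_cases h2 : u = v'
      · subst h2
        rw [hql', hqr'] at hx
        rcases hx with hx | hx
        · exact hI.hclk v x (Or.inl hx.1)
        · exact hI.hclk v x (Or.inr hx.1)
      · rw [hqlu u h1 h2, hqru u h1 h2] at hx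
        exact hI.hclk u x hx
  rcases hcase with ⟨hv'V, _, _, _⟩ | ⟨_, hV, hrho⟩
  · exact absurd hv'V hfresh
  have hInvq : Inv C q := by
    constructor
    · intro u hu
      rw [hU] at hu
      rw [hV]
      rcases Finset.mem_insert.1 hu with rfl | hu
      · exact Finset.mem_insert_self _ _
      · exact Finset.mem_insert_of_mem (hI.hUV u (Finset.mem_of_mem_erase hu))
    · intro e he
      rw [hE] at he
      rw [hV]
      exact ⟨Finset.mem_insert_of_mem (hI.hEV e he).1,
        Finset.mem_insert_of_mem (hI.hEV e he).2⟩
    · rw [hE]; exact hI.hac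
    · exact hzeroq
    · exact hclkq
    · intro u μ' hμ'
      rw [hlab] at hμ'
      by_cases h1 : u = v
      · subst h1
        rw [Function.update_self] at hμ'
        cases hμ'
        simp [FSLabel.cost]
      · rw [Function.update_of_ne h1] at hμ'
        exact hI.hcost u μ' hμ'
  refine ⟨hInvq, ?_⟩
  apply mu_arith_fresh hsz
  · apply size_lt_of_fresh (p := p) (q := q) (v' := v')
    · rw [hV]; exact Finset.subset_insert _ _
    · rw [hV]; exact Finset.mem_insert_self _ _
    · exact hfresh
    · exact fun u hu => le_of_eq (wt_var hlab hlabv u hu)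
    · unfold wt
      rw [hlab, Function.update_of_ne hne]
      cases hl : p.lab v' with
      | none => simp
      | some μ' => simpa using hI.hcost v' μ' hl
    · intro w u hu hwu
      rw [hE] at hwu
      exact ⟨(hI.hEV _ hwu).1, hwu⟩
  · apply innerM_le hInvq
    rw [hV]
    have h1 : (insert v' p.V).card ≤ p.V.card + 1 := Finset.card_insert_le _ _
    have h2 := cardV_le_size hI
    omega

end FSFinite
namespace FSFinite

variable {P : Type}

lemma mem_side {S1 S2 : Set (CModel P)} {b : Bool} {y : CModel P}
    (hy : y ∈ (if b then S1 else S2)) : y ∈ S1 ∨ y ∈ S2 := by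
  cases b <;> simp_all

lemma mem_side' {S1 S2 : Set (CModel P)} {b : Bool} {y : CModel P}
    (hy : y ∈ (if b then S1 else S2)) : (b = true ∧ y ∈ S1) ∨ (b = false ∧ y ∈ S2) := by
  cases b <;> simp_all

lemma no_step_win {k : ℕ} {A B : Set (PModel P)} {b : Bool} {g' : GPos P}
    (h : gstep k A B (.win b) g') : False := by
  nomatch h

/-- The key step lemma: from a good position, any move either ends the play or
leads to a good position of smaller measure. -/
lemma step_dec {k C : ℕ} {A B : Set (PModel P)} {g g' : GPos P}
    (hg : Good k C g) (hs : gstep k A B g g') :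
    (∃ b, g' = .win b) ∨ (Good k C g' ∧ mu k C g' < mu k C g) := by
  cases hs with
  | start A' hsub hfin => exact absurd hg (by simp [Good])
  | clock A' c => exact absurd hg (by simp [Good])
  | chooseB cA cB hsub hfin => exact absurd hg (by simp [Good])
  | setup cA cB p hU hE hB hlab hpair hleft1 hleft2 hleft3 hright1 hright2 =>
      exact absurd hg (by simp [Good])
  | samsonLoses p h => exact Or.inl ⟨false, rfl⟩
  | pick p v hv h =>
      right
      have hsz : p.size ≤ k := by
        by_contra hc
        exact h (Or.inl (by omega))
      exact ⟨⟨hg, hsz, hv⟩, by simp [mu]⟩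
  | sigMove p v μ b hsig hcompat hb => exact Or.inl ⟨b, rfl⟩
  | negMove p q v v' hext =>
      right
      obtain ⟨hI, hsz, hvU⟩ := hg
      have hd := extend1_dec (k := k) hI hsz hvU hext (by simp [FSLabel.cost])
        (fun x hx => le_cmax p v (Or.inr hx)) (fun x hx => le_cmax p v (Or.inl hx))
      refine ⟨hd.1, ?_⟩
      have h2 := hd.2
      simp only [mu] at *
      omega
  | orMove p q v v1 v2 L1 L2 hsplit hext =>
      right
      obtain ⟨hI, hsz, hvU⟩ := hg
      have hd := extend2_dec (k := k) hI hsz hvU hext (by simp [FSLabel.cost])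
        (fun x hx => le_cmax p v (Or.inl (hsplit ▸ Set.mem_union_left _ hx)))
        (fun x hx => le_cmax p v (Or.inr hx))
        (fun x hx => le_cmax p v (Or.inl (hsplit ▸ Set.mem_union_right _ hx)))
        (fun x hx => le_cmax p v (Or.inr hx))
      refine ⟨hd.1, ?_⟩
      have h2 := hd.2
      simp only [mu] at *
      omega
  | andMove p q v v1 v2 R1 R2 hsplit hext =>
      right
      obtain ⟨hI, hsz, hvU⟩ := hg
      have hd := extend2_dec (k := k) hI hsz hvU hext (by simp [FSLabel.cost])
        (fun x hx => le_cmax p v (Or.inl hx))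
        (fun x hx => le_cmax p v (Or.inr (hsplit ▸ Set.mem_union_left _ hx)))
        (fun x hx => le_cmax p v (Or.inl hx))
        (fun x hx => le_cmax p v (Or.inr (hsplit ▸ Set.mem_union_right _ hx)))
      refine ⟨hd.1, ?_⟩
      have h2 := hd.2
      simp only [mu] at *
      omega
  | modalMoveS p v v' mk m f hm hcompat hf =>
      right
      obtain ⟨hI, hsz, hvU⟩ := hg
      exact ⟨⟨hI, hsz, hvU, hm, fun x hx => (hf x hx).1⟩, by simp [mu]⟩
  | modalMoveD p v v' mk m f D h chosen hD hh hchfin hch =>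
      right
      obtain ⟨hI, hsz, hvU, hm, hfsub⟩ := hg
      refine ⟨⟨hI, hsz, hvU, hm, ?_, ?_⟩, by simp [mu]⟩
      · intro x hx
        rcases Set.mem_iUnion₂.1 (hch hx) with ⟨y, hy, hxy⟩
        have h1 : x.2 = y.2 := baseFun_clock (hfsub y hy hxy)
        have h2 := le_cmax p v (mem_side hy)
        omega
      · intro y hy z hz
        have h1 : z.2 = y.2 := baseFun_clock ((hh y hy).1 hz)
        have h2 := le_cmax p v (Or.symm (mem_side (hD hy)))
        omega
  | modalMoveS2 p q v v' mk m f D h chosen r hr hext =>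
      right
      obtain ⟨hI, hsz, hvU, hm, hCB1, hCB2⟩ := hg
      have hjoin : ∀ x ∈ (⋃ y ∈ D, r y), x.2 ≤ cmax p v := by
        intro x hx
        rcases Set.mem_iUnion₂.1 hx with ⟨y, hy, hxy⟩
        exact hCB2 y hy x ((hr y hy).1 hxy)
      have hLb : ∀ x ∈ (if mk.samsonLeft then chosen else ⋃ y ∈ D, r y),
          x.2 ≤ cmax p v := by
        intro x hx
        rcases mem_side' hx with ⟨_, hx⟩ | ⟨_, hx⟩
        · exact hCB1 x hx
        · exact hjoin x hx
      have hRb : ∀ x ∈ (if mk.samsonLeft then ⋃ y ∈ D, r y else chosen),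
          x.2 ≤ cmax p v := by
        intro x hx
        rcases mem_side' hx with ⟨_, hx⟩ | ⟨_, hx⟩
        · exact hjoin x hx
        · exact hCB1 x hx
      have hd := extend1_dec (k := k) hI hsz hvU hext (label_cost_pos mk hm) hLb hRb
      refine ⟨hd.1, ?_⟩
      have h2 := hd.2
      simp only [mu] at *
      omega
  | xMove p v X hiter hcompat =>
      right
      obtain ⟨hI, hsz, hvU⟩ := hg
      exact ⟨⟨hI, hsz, hvU, hcompat⟩, by simp [mu]⟩
  | xWin p v X h1 h2 => exact Or.inl ⟨true, rfl⟩
  | xNoChal p q v v' X hne hext =>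
      right
      obtain ⟨hI, hsz, hvU, hcompat⟩ := hg
      have hd := xNoChal_dec (k := k) hI hsz hvU hcompat hne hext
      refine ⟨hd.1, ?_⟩
      have h2 := hd.2
      simp only [mu] at *
      omega
  | xChal p q v v' X hfresh hext =>
      right
      obtain ⟨hI, hsz, hvU, hcompat⟩ := hg
      have hd := xChal_dec (k := k) hI hsz hvU hcompat hfresh hext
      refine ⟨hd.1, ?_⟩
      have h2 := hd.2
      simp only [mu] at *
      omega

end FSFinite
/-- Every play of the formula size game `FS^Π_k(𝔸,𝔹)` is
finite: there is no infinite sequence of game positions starting from the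
starting position in which each position is followed by a legal move. -/
theorem fs_game_plays_finite (P : Type) (k : ℕ) (A B : Set (PModel P)) :
    ¬ ∃ g : ℕ → GPos P, g 0 = .start ∧ ∀ i : ℕ, gstep k A B (g i) (g (i + 1)) := by
  open FSFinite in
  rintro ⟨g, h0, hstep⟩
  -- Move 0: Delilah chooses 𝔸'.
  obtain ⟨A', hsubA, hfinA, hg1⟩ :
      ∃ A', A' ⊆ A ∧ A'.Finite ∧ g 1 = .clockS A' := by
    have h1 := hstep 0
    rw [h0] at h1
    generalize hx : g 1 = x at h1 ⊢
    cases h1 with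
    | start A' hsub hfin => exact ⟨A', hsub, hfin, rfl⟩
  -- Move 1: Samson assigns clocks.
  obtain ⟨c, hg2⟩ :
      ∃ c : PModel P → ℕ, g 2 = .chooseB {x | x.1 ∈ A' ∧ x.2 = c x.1} := by
    have h2 := hstep 1
    rw [hg1] at h2
    generalize hx : g 2 = x at h2 ⊢
    cases h2 with
    | clock A'' c => exact ⟨c, rfl⟩
  set cA : Set (CModel P) := {x | x.1 ∈ A' ∧ x.2 = c x.1} with hcA
  -- Move 2: Delilah chooses the clocked 𝔹-models.
  obtain ⟨cB, hsubB, hfinB, hg3⟩ :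
      ∃ cB : Set (CModel P), (∀ x ∈ cB, x.1 ∈ B) ∧ cB.Finite ∧ g 3 = .setup cA cB := by
    have h3 := hstep 2
    rw [hg2] at h3
    generalize hx : g 3 = x at h3 ⊢
    cases h3 with
    | chooseB cA' cB hsub hfin => exact ⟨cB, hsub, hfin, rfl⟩
  -- Move 3: Samson sets up the initial forest position.
  obtain ⟨p0, hU, hE, hlab, hleft1, hleft3, hright1, hright2, hg4⟩ :
      ∃ p0 : FSPos P, p0.U = p0.V ∧ p0.E = ∅ ∧ (∀ n, p0.lab n = none) ∧
        (∀ v, p0.left v ⊆ cA) ∧ (∀ v ∉ p0.U, p0.left v = ∅) ∧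
        (∀ v ∈ p0.U, p0.right v = if (p0.rho v).2 then cB else initC cB) ∧
        (∀ v ∉ p0.U, p0.right v = ∅) ∧ g 4 = .main p0 := by
    have h4 := hstep 3
    rw [hg3] at h4
    generalize hx : g 4 = x at h4 ⊢
    cases h4 with
    | setup cA' cB' p hU hE hB hlab hpair hleft1 hleft2 hleft3 hright1 hright2 =>
        exact ⟨p, hU, hE, hlab, hleft1, hleft3, hright1, hright2, rfl⟩
  -- The global clock bound.
  have hfinA2 : cA.Finite := by
    apply Set.Finite.subset (hfinA.image fun a => (a, c a))
    intro x hx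
    exact ⟨x.1, hx.1, Prod.ext rfl hx.2.symm⟩
  have hfinU : (cA ∪ cB).Finite := hfinA2.union hfinB
  set C : ℕ := sSup (Prod.snd '' (cA ∪ cB)) with hC
  have hCb : ∀ x ∈ cA ∪ cB, x.2 ≤ C := by
    intro x hx
    exact le_csSup (hfinU.image _).bddAbove ⟨x, hx, rfl⟩
  -- The initial position is good.
  have hInv0 : Inv C p0 := by
    constructor
    · intro v hv; exact hU ▸ hv
    · intro e he; rw [hE] at he; exact absurd he (Finset.notMem_empty e)
    · intro v hv
      rcases Relation.TransGen.head'_iff.1 hv with ⟨w, hw, _⟩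
      have : (v, w) ∈ p0.E := hw
      rw [hE] at this
      exact absurd this (Finset.notMem_empty _)
    · intro v hv x hx
      rcases hx with hx | hx
      · rw [hleft3 v hv] at hx; exact absurd hx (Set.notMem_empty x)
      · rw [hright2 v hv] at hx; exact absurd hx (Set.notMem_empty x)
    · intro v x hx
      rcases hx with hx | hx
      · exact hCb x (Or.inl (hleft1 v hx))
      · by_cases hvU : v ∈ p0.U
        · rw [hright1 v hvU] at hx
          rcases mem_side' hx with ⟨_, hx⟩ | ⟨_, hx⟩
          · exact hCb x (Or.inr hx)
          · exact hCb x (Or.inr hx.1)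
        · rw [hright2 v hvU] at hx; exact absurd hx (Set.notMem_empty x)
    · intro v μ h
      rw [hlab v] at h
      exact absurd h (by simp)
  have hGood4 : Good k C (g 4) := by
    rw [hg4]
    exact hInv0
  -- The measure strictly decreases along the play.
  set F : ℕ → ℕ := fun n => mu k C (g (n + 4)) with hF
  have key : ∀ n, Good k C (g (n + 4)) →
      Good k C (g (n + 5)) ∧ F (n + 1) < F n := by
    intro n hGn
    rcases step_dec hGn (hstep (n + 4)) with ⟨b, hb⟩ | hok
    · exfalso
      have h5 := hstep (n + 5)
      have hb' : g (n + 5) = GPos.win b := hb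
      rw [hb'] at h5
      exact no_step_win h5
    · refine ⟨hok.1, ?_⟩
      have : mu k C (g (n + 4 + 1)) < mu k C (g (n + 4)) := hok.2
      exact this
  have hall : ∀ n, Good k C (g (n + 4)) := by
    intro n
    induction n with
    | zero => exact hGood4
    | succ m ih => exact (key m ih).1
  have hdec : ∀ n, F (n + 1) < F n := fun n => (key n (hall n)).2
  have hbound : ∀ n, F n + n ≤ F 0 := by
    intro n
    induction n with
    | zero => omega
    | succ m ih =>
        have := hdec m
        omega
  have := hbound (F 0 + 1)
  omega
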